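/- Let k be odd and let G be the graph whose vertices are the binary k-tuples with an odd number of ones, excluding the all-ones vector, with u adjacent to v iff ⟨u,v⟩ = 1 over F₂. Then G is a regular graph on n = 2^(k−1) − 1 vertices of degree d = 2^(k−2) − 2. -/

import Mathlib

/-- The vertices of the binary graph: binary `k`-tuples with an odd number of ones
(equivalently, summing to `1` over `F₂`), excluding the all-ones vector. -/
def BinaryVertex (k : ℕ) : Type :=
  {v : Fin k → ZMod 2 // (∑ i, v i) = 1 ∧ v ≠ fun _ => 1}

/-- The binary graph: `u` is adjacent to `v` iff `u ≠ v` and `⟨u, v⟩ = 1` over `F₂`. -/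
def binaryGraph (k : ℕ) : SimpleGraph (BinaryVertex k) where
  Adj u v := u ≠ v ∧ (∑ i, u.1 i * v.1 i) = 1
  symm := by
    constructor
    rintro u v ⟨h1, h2⟩
    refine ⟨h1.symm, ?_⟩
    calc (∑ i, v.1 i * u.1 i) = ∑ i, u.1 i * v.1 i :=
          Finset.sum_congr rfl fun i _ => mul_comm _ _
      _ = 1 := h2
  loopless := by
    constructor
    rintro v ⟨h1, -⟩
    exact h1 rfl

open Finset

lemma card_filter_eq_of_invol {α : Type*} [Fintype α] [DecidableEq α]
    (p q : α → Prop) [DecidablePred p] [DecidablePred q] (f : α → α)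
    (hff : ∀ a, f (f a) = a) (hpq : ∀ a, p a → q (f a)) (hqp : ∀ a, q a → p (f a)) :
    (univ.filter p).card = (univ.filter q).card := by
  apply Finset.card_bij' (fun a _ => f a) (fun a _ => f a)
  · intro a ha; simp only [mem_filter, mem_univ, true_and] at ha ⊢; exact hpq a ha
  · intro a ha; simp only [mem_filter, mem_univ, true_and] at ha ⊢; exact hqp a ha
  · intro a _; exact hff a
  · intro a _; exact hff a

lemma zmod2_sq (x : ZMod 2) : x * x = x := by revert x; decide

lemma zmod2_self (x : ZMod 2) : x + x = 0 := by revert x; decide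

lemma zmod2_ne_one (x : ZMod 2) (h : x ≠ 1) : x = 0 := by revert x; decide

lemma invol_add {k : ℕ} (a : Fin k → ZMod 2) (u : Fin k → ZMod 2) : (u + a) + a = u := by
  funext i; simp [add_assoc, zmod2_self]

lemma sum_add_dist {k : ℕ} (u a : Fin k → ZMod 2) :
    ∑ i, (u + a) i = (∑ i, u i) + ∑ i, a i := by
  simp [Finset.sum_add_distrib]

lemma sum_single {k : ℕ} (j : Fin k) : ∑ i, Pi.single j (1 : ZMod 2) i = 1 := by
  simp

lemma card_sum_one_aux (m : ℕ) (a : Fin (m + 1) → ZMod 2) (hsa : ∑ i, a i = 1) :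
    (univ.filter (fun u : Fin (m + 1) → ZMod 2 => ∑ i, u i = 1)).card = 2 ^ m := by
  have key : (univ.filter (fun u : Fin (m + 1) → ZMod 2 => ∑ i, u i = 1)).card
      = (univ.filter (fun u : Fin (m + 1) → ZMod 2 => ¬ (∑ i, u i = 1))).card := by
    apply card_filter_eq_of_invol _ _ (fun u => u + a) (invol_add a)
    · intro u hu
      rw [sum_add_dist, hu, hsa]
      decide
    · intro u hu
      have := zmod2_ne_one _ hu
      rw [sum_add_dist, this, hsa, zero_add]
  have tot' : (univ.filter (fun u : Fin (m + 1) → ZMod 2 => ∑ i, u i = 1)).card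
      + (univ.filter (fun u : Fin (m + 1) → ZMod 2 => ¬ (∑ i, u i = 1))).card
      = 2 ^ (m + 1) := by
    have hcard : Fintype.card (Fin (m + 1) → ZMod 2) = 2 ^ (m + 1) := by simp
    rw [← hcard, ← Finset.card_univ]
    exact Finset.card_filter_add_card_filter_not _
  rw [← key, ← two_mul, pow_succ, mul_comm] at tot'
  exact Nat.eq_of_mul_eq_mul_right (by norm_num) tot'

lemma card_sum_one (k : ℕ) (hk : 0 < k) :
    (univ.filter (fun u : Fin k → ZMod 2 => ∑ i, u i = 1)).card = 2 ^ (k - 1) := by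
  obtain ⟨m, rfl⟩ : ∃ m, k = m + 1 := ⟨k - 1, by omega⟩
  simpa using card_sum_one_aux m (Pi.single 0 1) (sum_single _)

lemma fsum_add {k : ℕ} (V u a : Fin k → ZMod 2) :
    ∑ i, V i * (u + a) i = (∑ i, V i * u i) + ∑ i, V i * a i := by
  rw [← Finset.sum_add_distrib]
  exact Finset.sum_congr rfl fun i _ => by simp [mul_add]

lemma card_pair (m : ℕ) (V : Fin (m + 2) → ZMod 2) (hs : ∑ i, V i = 1)
    (i0 : Fin (m + 2)) (hi0 : V i0 = 0) :
    (univ.filter (fun u : Fin (m + 2) → ZMod 2 =>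
      (∑ i, u i = 1) ∧ (∑ i, V i * u i = 1))).card = 2 ^ m := by
  set a : Fin (m + 2) → ZMod 2 := V + Pi.single i0 1 with ha
  have hsa : ∑ i, a i = 0 := by
    rw [ha, sum_add_dist, hs, sum_single]
    decide
  have hfa : ∑ i, V i * a i = 1 := by
    rw [ha, fsum_add]
    have h1 : ∑ i, V i * V i = 1 := by
      rw [← hs]; exact Finset.sum_congr rfl fun i _ => zmod2_sq _
    have h2 : ∑ i, V i * (Pi.single i0 1 : Fin (m + 2) → ZMod 2) i = V i0 := by
      simp [Pi.single_apply, mul_ite]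
    rw [h1, h2, hi0, add_zero]
  have key : (univ.filter (fun u : Fin (m + 2) → ZMod 2 =>
        (∑ i, u i = 1) ∧ (∑ i, V i * u i = 1))).card
      = (univ.filter (fun u : Fin (m + 2) → ZMod 2 =>
        (∑ i, u i = 1) ∧ ¬ (∑ i, V i * u i = 1))).card := by
    apply card_filter_eq_of_invol _ _ (fun u => u + a) (invol_add a)
    · rintro u ⟨hu1, hu2⟩
      refine ⟨by rw [sum_add_dist, hu1, hsa, add_zero], ?_⟩
      rw [fsum_add, hu2, hfa]
      decide
    · rintro u ⟨hu1, hu2⟩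
      have h0 := zmod2_ne_one _ hu2
      refine ⟨by rw [sum_add_dist, hu1, hsa, add_zero], ?_⟩
      rw [fsum_add, h0, hfa, zero_add]
  have tot := Finset.card_filter_add_card_filter_not
    (s := univ.filter (fun u : Fin (m + 2) → ZMod 2 => ∑ i, u i = 1))
    (p := fun u => ∑ i, V i * u i = 1)
  rw [Finset.filter_filter, Finset.filter_filter] at tot
  have hbase : (univ.filter (fun u : Fin (m + 2) → ZMod 2 => ∑ i, u i = 1)).card
      = 2 ^ (m + 1) := by
    have := card_sum_one (m + 2) (Nat.succ_pos _)
    simpa using this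
  rw [hbase, ← key, ← two_mul, pow_succ, mul_comm (2 ^ m) 2] at tot
  exact Nat.eq_of_mul_eq_mul_left (by norm_num) tot

lemma sum_ones {k : ℕ} (hk : Odd k) : ∑ _i : Fin k, (1 : ZMod 2) = 1 := by
  obtain ⟨m, rfl⟩ := hk
  rw [Finset.sum_const, Finset.card_univ, Fintype.card_fin, nsmul_eq_mul, mul_one]
  push_cast
  have h2 : (2 : ZMod 2) = 0 := rfl
  rw [h2]
  ring

/-- For odd `k`, the binary graph has `n = 2^(k−1) − 1` vertices and is
regular of degree `d = 2^(k−2) − 2`. -/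
theorem binaryGraph_card_and_regular (k : ℕ) (hk : Odd k) :
    Nat.card (BinaryVertex k) = 2 ^ (k - 1) - 1 ∧
    ∀ v : BinaryVertex k, Nat.card ((binaryGraph k).neighborSet v) = 2 ^ (k - 2) - 2 := by
  constructor
  · -- number of vertices
    have hk0 : 0 < k := hk.pos
    show Nat.card {v : Fin k → ZMod 2 // (∑ i, v i) = 1 ∧ v ≠ fun _ => 1} = 2 ^ (k - 1) - 1
    rw [Nat.card_eq_fintype_card, Fintype.card_subtype]
    have heq : univ.filter (fun v : Fin k → ZMod 2 => (∑ i, v i) = 1 ∧ v ≠ fun _ => 1)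
        = (univ.filter (fun v : Fin k → ZMod 2 => ∑ i, v i = 1)).erase (fun _ => 1) := by
      ext w
      simp only [Finset.mem_filter, Finset.mem_univ, true_and, Finset.mem_erase]
      tauto
    have hmem : (fun _ => (1 : ZMod 2)) ∈
        univ.filter (fun v : Fin k → ZMod 2 => ∑ i, v i = 1) := by
      simp only [Finset.mem_filter, Finset.mem_univ, true_and]
      exact sum_ones hk
    rw [heq, Finset.card_erase_of_mem hmem, card_sum_one k hk0]
  · intro v
    rcases Nat.lt_or_ge k 2 with hk2 | hk2
    · -- k = 1 : no vertices at all
      exfalso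
      have hk1 : k = 1 := by
        have := hk.pos; omega
      subst hk1
      apply v.2.2
      funext i
      have hi : i = 0 := Subsingleton.elim _ _
      have := v.2.1
      rw [Fin.sum_univ_one] at this
      rw [hi, this]
    · obtain ⟨m, rfl⟩ : ∃ m, k = m + 2 := ⟨k - 2, by omega⟩
      obtain ⟨i0, hi0'⟩ := Function.ne_iff.mp v.2.2
      have hi0 : v.1 i0 = 0 := zmod2_ne_one _ hi0'
      have hfv : ∑ i, v.1 i * v.1 i = 1 := by
        have h : ∑ i, v.1 i * v.1 i = ∑ i, v.1 i :=
          Finset.sum_congr rfl fun i _ => zmod2_sq _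
        rw [h]; exact v.2.1
      have hfo : ∑ i, v.1 i * (fun _ => (1 : ZMod 2)) i = 1 := by
        simpa using v.2.1
      -- transfer to a subtype of the ambient space
      have e : ((binaryGraph (m + 2)).neighborSet v) ≃
          {w : Fin (m + 2) → ZMod 2 //
            ((∑ i, w i = 1) ∧ (∑ i, v.1 i * w i = 1)) ∧ w ≠ v.1 ∧ w ≠ fun _ => 1} :=
        { toFun := fun u => ⟨u.1.1, ⟨⟨u.1.2.1, u.2.2⟩,
            fun h => u.2.1 (Subtype.ext h).symm, u.1.2.2⟩⟩
          invFun := fun w => ⟨⟨w.1, w.2.1.1, w.2.2.2⟩,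
            ⟨fun h => w.2.2.1 (congrArg Subtype.val h).symm, w.2.1.2⟩⟩
          left_inv := fun _ => rfl
          right_inv := fun _ => rfl }
      rw [Nat.card_congr e, Nat.card_eq_fintype_card, Fintype.card_subtype]
      have heq : univ.filter (fun w : Fin (m + 2) → ZMod 2 =>
            ((∑ i, w i = 1) ∧ (∑ i, v.1 i * w i = 1)) ∧ w ≠ v.1 ∧ w ≠ fun _ => 1)
          = (univ.filter (fun w : Fin (m + 2) → ZMod 2 =>
              (∑ i, w i = 1) ∧ (∑ i, v.1 i * w i = 1))) \ {v.1, fun _ => 1} := by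
        ext w
        simp only [Finset.mem_filter, Finset.mem_univ, true_and, Finset.mem_sdiff,
          Finset.mem_insert, Finset.mem_singleton]
        tauto
      have hsub : ({v.1, fun _ => 1} : Finset (Fin (m + 2) → ZMod 2)) ⊆
          univ.filter (fun w : Fin (m + 2) → ZMod 2 =>
            (∑ i, w i = 1) ∧ (∑ i, v.1 i * w i = 1)) := by
        intro w hw
        simp only [Finset.mem_insert, Finset.mem_singleton] at hw
        simp only [Finset.mem_filter, Finset.mem_univ, true_and]
        rcases hw with rfl | rfl
        · exact ⟨v.2.1, hfv⟩
        · exact ⟨sum_ones hk, hfo⟩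
      rw [heq, Finset.card_sdiff_of_subset hsub, Finset.card_pair v.2.2,
        card_pair m v.1 v.2.1 i0 hi0]
      simp
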